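/- Let 0 ≤ γ < π and let η be admissible with E_{η;γ} continuous on ℝ. Then the convolution E_{η;γ} ∗ a with the sawtooth function a is differentiable at every α ∈ ℝ with α ∉ 2πℤ, with derivative d/dα (E_{η;γ} ∗ a)(α) = 1 − 2π E_{η;γ}(α). -/

import Mathlib

open Real MeasureTheory

/-- The admissibility constant `c_η = (2π/κ) ∫_{γ−π}^{γ} |η(q)|²/sin(γ−q) dq`. -/
noncomputable def cEta (κ γ : ℝ) (η : ℝ → ℂ) : ℝ :=
  2 * π / κ * ∫ q in (γ - π)..γ, ‖η q‖ ^ 2 / Real.sin (γ - q)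

/-- The 2π-periodic function `E_{η;γ}(α) = (2π/(κ c_η)) |η(α)|²/sin(γ−α)`. -/
noncomputable def Efun (κ γ : ℝ) (η : ℝ → ℂ) (α : ℝ) : ℝ :=
  2 * π / (κ * cEta κ γ η) * ‖η α‖ ^ 2 / Real.sin (γ - α)

/-- The 2π-periodic sawtooth (angle) function `a(α) = α` for `α ∈ [0, 2π)`. -/
noncomputable def saw (α : ℝ) : ℝ := α - 2 * π * (⌊α / (2 * π)⌋ : ℝ)

/-- The periodic convolution `(E_{η;γ} ∗ a)(α) = ∫₀^{2π} E_{η;γ}(α−q) a(q) dq`. -/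
noncomputable def convEa (κ γ : ℝ) (η : ℝ → ℂ) (α : ℝ) : ℝ :=
  ∫ q in (0:ℝ)..(2 * π), Efun κ γ η (α - q) * saw q

/-- For `0 ≤ γ < π` and admissible `η` with `E_{η;γ}` continuous, the convolution
`E_{η;γ} ∗ a` is differentiable at every `α ∉ 2πℤ`, with derivative
`1 − 2π E_{η;γ}(α)`. -/
theorem convolution_derivative (κ γ : ℝ) (hκ : 0 < κ) (hγ0 : 0 ≤ γ) (hγπ : γ < π)
    (η : ℝ → ℂ) (hper : Function.Periodic η (2 * π))
    (hsupp : ∀ α ∈ Set.Ioo (γ - π) (γ + π), η α ≠ 0 → α ∈ Set.Ioo (γ - π) γ)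
    (hint : IntervalIntegrable (fun q => ‖η q‖ ^ 2 / Real.sin (γ - q)) volume (γ - π) γ)
    (hpos : 0 < cEta κ γ η)
    (hEc : Continuous (Efun κ γ η)) :
    ∀ α : ℝ, (∀ k : ℤ, α ≠ 2 * π * k) →
      HasDerivAt (convEa κ γ η) (1 - 2 * π * Efun κ γ η α) α := by
  have hπ : (0:ℝ) < π := Real.pi_pos
  set E := Efun κ γ η with hEdef
  -- periodicity of E
  have hEper : Function.Periodic E (2 * π) := by
    intro x
    simp only [hEdef, Efun, hper x]
    rw [show γ - (x + 2 * π) = (γ - x) - 2 * π from by ring, Real.sin_sub_two_pi]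
  -- E vanishes on [γ, γ+π]
  have hπη : ∀ x ∈ Set.Icc γ (γ + π), E x = 0 := by
    intro x hx
    rcases eq_or_lt_of_le hx.2 with h | h
    · have hs : Real.sin (γ - x) = 0 := by
        rw [h, show γ - (γ + π) = -π from by ring, Real.sin_neg, Real.sin_pi, neg_zero]
      simp [hEdef, Efun, hs]
    · have hxIoo : x ∈ Set.Ioo (γ - π) (γ + π) :=
        ⟨lt_of_lt_of_le (by linarith) hx.1, h⟩
      have hη0 : η x = 0 := by
        by_contra hne
        exact absurd ((hsupp x hxIoo hne).2) (not_lt.mpr hx.1)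
      simp [hEdef, Efun, hη0]
  -- the integral of E over one period is 1
  have hint1 : ∫ x in (0:ℝ)..(2 * π), E x = 1 := by
    have h1 : ∫ x in (0:ℝ)..(2*π), E x = ∫ x in (γ-π)..(γ+π), E x := by
      have := hEper.intervalIntegral_add_eq 0 (γ - π)
      simpa [zero_add, show γ - π + 2*π = γ + π by ring] using this
    have h2 : (∫ x in (γ-π)..γ, E x) + ∫ x in γ..(γ+π), E x = ∫ x in (γ-π)..(γ+π), E x :=
      intervalIntegral.integral_add_adjacent_intervals (μ := volume)
        (hEc.intervalIntegrable _ _) (hEc.intervalIntegrable _ _)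
    have h3 : ∫ x in γ..(γ+π), E x = 0 := by
      rw [intervalIntegral.integral_congr (g := fun _ => 0)
        (by rwa [Set.uIcc_of_le (by linarith)])]
      simp
    have h4 : ∫ x in (γ-π)..γ, E x
        = 2 * π / (κ * cEta κ γ η) * ∫ q in (γ-π)..γ, ‖η q‖ ^ 2 / Real.sin (γ - q) := by
      rw [← intervalIntegral.integral_const_mul]
      apply intervalIntegral.integral_congr
      intro x _
      simp [hEdef, Efun, mul_div_assoc]
    have hc : cEta κ γ η = 2 * π / κ * ∫ q in (γ-π)..γ, ‖η q‖ ^ 2 / Real.sin (γ - q) := rfl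
    set I := ∫ q in (γ-π)..γ, ‖η q‖ ^ 2 / Real.sin (γ - q) with hI
    have hIne : I ≠ 0 := by
      intro h0
      rw [hc, h0, mul_zero] at hpos
      exact lt_irrefl 0 hpos
    rw [h1, ← h2, h3, h4, hc]
    field_simp
    simp
  -- antiderivative H of u * E u
  have hHc : Continuous (fun u : ℝ => u * E u) := continuous_id.mul hEc
  set H : ℝ → ℝ := fun x => ∫ u in (0:ℝ)..x, u * E u with hHdef
  have hconv : ∀ α : ℝ, convEa κ γ η α = α - (H α - H (α - 2 * π)) := by
    intro α
    have e1 : convEa κ γ η α = ∫ q in (0:ℝ)..(2 * π), E (α - q) * q := by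
      rw [convEa]
      apply intervalIntegral.integral_congr_ae
      have hne : ∀ᵐ q : ℝ, q ≠ 2 * π := by
        rw [ae_iff]
        simpa using measure_singleton (μ := (volume : Measure ℝ)) (2 * π)
      filter_upwards [hne] with q hq hmem
      rw [Set.uIoc_of_le (by positivity : (0:ℝ) ≤ 2 * π)] at hmem
      have hq2 : q < 2 * π := lt_of_le_of_ne hmem.2 hq
      have h0 : ⌊q / (2 * π)⌋ = 0 := by
        rw [Int.floor_eq_zero_iff]
        exact ⟨div_nonneg hmem.1.le (by positivity), (div_lt_one (by positivity)).mpr hq2⟩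
      simp [saw, h0]
      exact Or.inl rfl
    have e2 : ∫ q in (0:ℝ)..(2 * π), E (α - q) * q
        = ∫ u in (α - 2 * π)..α, E u * (α - u) := by
      have h := intervalIntegral.integral_comp_sub_left (a := (0:ℝ)) (b := 2 * π)
        (fun u => E u * (α - u)) α
      simp only [sub_zero] at h
      rw [← h]
      apply intervalIntegral.integral_congr
      intro q _
      simp
    have hiE : IntervalIntegrable (fun u => α * E u) volume (α - 2 * π) α :=
      ((continuous_const.mul hEc).intervalIntegrable _ _)
    have hiuE : IntervalIntegrable (fun u => u * E u) volume (α - 2 * π) α :=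
      (hHc.intervalIntegrable _ _)
    have e3 : ∫ u in (α - 2 * π)..α, E u * (α - u)
        = (∫ u in (α - 2 * π)..α, α * E u) - ∫ u in (α - 2 * π)..α, u * E u := by
      rw [← intervalIntegral.integral_sub hiE hiuE]
      apply intervalIntegral.integral_congr
      intro u _
      ring
    have e4 : ∫ u in (α - 2 * π)..α, α * E u = α := by
      rw [intervalIntegral.integral_const_mul]
      have h := hEper.intervalIntegral_add_eq (α - 2 * π) 0
      rw [show α - 2 * π + 2 * π = α from by ring, zero_add] at h
      rw [h, hint1, mul_one]
    have e5 : ∫ u in (α - 2 * π)..α, u * E u = H α - H (α - 2 * π) := by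
      have h := intervalIntegral.integral_add_adjacent_intervals (μ := volume)
        (a := (0:ℝ)) (b := α - 2 * π) (c := α)
        (hHc.intervalIntegrable _ _) (hHc.intervalIntegrable _ _)
      simp only [hHdef]
      linarith [h]
    rw [e1, e2, e3, e4, e5]
  intro α _
  rw [show convEa κ γ η = fun α => α - (H α - H (α - 2 * π)) from funext hconv]
  have hH : ∀ x : ℝ, HasDerivAt H (x * E x) x := fun x =>
    intervalIntegral.integral_hasDerivAt_right (hHc.intervalIntegrable _ _)
      (hHc.stronglyMeasurable.stronglyMeasurableAtFilter) hHc.continuousAt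
  have hH2 : HasDerivAt (fun x => H (x - 2 * π)) ((α - 2 * π) * E (α - 2 * π) * 1) α :=
    by
      have hs : HasDerivAt (fun x : ℝ => x - 2 * π) 1 α := (hasDerivAt_id α).sub_const (2 * π)
      exact (hH (α - 2 * π)).comp α hs
  have hmain : HasDerivAt (fun x => x - (H x - H (x - 2 * π)))
      (1 - (α * E α - (α - 2 * π) * E (α - 2 * π) * 1)) α :=
    (hasDerivAt_id α).sub ((hH α).sub hH2)
  convert hmain using 1
  rw [hEper.sub_eq α]
  ring
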